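/- For every positive integer m, there exists r = r(m) = 2^{2m} such that every bipartite graph G = (A, B, E) with neighbourhood diversity at least r contains either a skew matching of size m or the complement of a skew matching of size m. -/

import Mathlib

/-- The bipartite graph on `A ⊕ B` determined by the edge relation `E : A → B → Prop`. -/
def bipGraph (A B : Type) (E : A → B → Prop) : SimpleGraph (A ⊕ B) :=
  SimpleGraph.fromRel (fun u v => ∃ a b, u = Sum.inl a ∧ v = Sum.inr b ∧ E a b)

/-- Two vertices are similar if no third vertex is adjacent to exactly one of them. -/
def VertSimilar {V : Type} (G : SimpleGraph V) (x y : V) : Prop :=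
  ∀ z, z ≠ x → z ≠ y → (G.Adj z x ↔ G.Adj z y)

open Classical in
/-- Key combinatorial lemma: a family of at least `2 ^ k` distinct "sets" (predicates on `β`)
contains a positive staircase of length `p` or a negative staircase of length `q`
whenever `p + q ≤ k + 1`. -/
lemma key_lemma (β : Type) : ∀ (k p q : ℕ) (F : Finset (β → Prop)), p + q ≤ k + 1 →
    2 ^ k ≤ F.card →
    (∃ (S : Fin p → β → Prop) (y : Fin p → β), (∀ i, S i ∈ F) ∧ (∀ i, S i (y i)) ∧
      ∀ i j, i < j → ¬ S j (y i)) ∨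
    (∃ (S : Fin q → β → Prop) (y : Fin q → β), (∀ i, S i ∈ F) ∧ (∀ i, ¬ S i (y i)) ∧
      ∀ i j, i < j → S j (y i)) := by
  intro k
  induction k with
  | zero =>
    intro p q F hpq _
    rcases Nat.eq_zero_or_pos p with rfl | hp
    · exact Or.inl ⟨Fin.elim0, Fin.elim0, fun i => i.elim0, fun i => i.elim0, fun i => i.elim0⟩
    · have hq : q = 0 := by omega
      subst hq
      exact Or.inr ⟨Fin.elim0, Fin.elim0, fun i => i.elim0, fun i => i.elim0, fun i => i.elim0⟩
  | succ k ih =>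
    intro p q F hpq hcard
    rcases Nat.eq_zero_or_pos p with rfl | hp
    · exact Or.inl ⟨Fin.elim0, Fin.elim0, fun i => i.elim0, fun i => i.elim0, fun i => i.elim0⟩
    rcases Nat.eq_zero_or_pos q with rfl | hq
    · exact Or.inr ⟨Fin.elim0, Fin.elim0, fun i => i.elim0, fun i => i.elim0, fun i => i.elim0⟩
    obtain ⟨p', rfl⟩ : ∃ p', p = p' + 1 := ⟨p - 1, by omega⟩
    obtain ⟨q', rfl⟩ : ∃ q', q = q' + 1 := ⟨q - 1, by omega⟩
    have h1 : 1 < F.card := lt_of_lt_of_le (Nat.one_lt_two_pow (by omega)) hcard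
    obtain ⟨S, hS, T, hT, hST⟩ := Finset.one_lt_card.mp h1
    have hy : ∃ y, ¬ (S y ↔ T y) := by
      by_contra h
      push_neg at h
      exact hST (funext fun y => propext (h y))
    obtain ⟨y, hy⟩ := hy
    set F₁ := F.filter (fun W => W y) with hF₁
    set F₀ := F.filter (fun W => ¬ W y) with hF₀
    have hsum : F₁.card + F₀.card = F.card :=
      Finset.card_filter_add_card_filter_not (s := F) (p := fun W => W y)
    have hsplit : 2 ^ k ≤ F₀.card ∨ 2 ^ k ≤ F₁.card := by
      rw [pow_succ] at hcard
      omega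
    have hWpos : ∃ W ∈ F, W y := by
      by_cases h : S y
      · exact ⟨S, hS, h⟩
      · exact ⟨T, hT, by tauto⟩
    have hWneg : ∃ W ∈ F, ¬ W y := by
      by_cases h : S y
      · exact ⟨T, hT, by tauto⟩
      · exact ⟨S, hS, h⟩
    rcases hsplit with h0 | h1'
    · rcases ih p' (q' + 1) F₀ (by omega) h0 with
        ⟨S', y', hmem, hdiag, hanti⟩ | ⟨S', y', hmem, hdiag, hanti⟩
      · obtain ⟨W, hWF, hWy⟩ := hWpos
        refine Or.inl ⟨Fin.cons W S', Fin.cons y y', ?_, ?_, ?_⟩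
        · intro i
          rcases Fin.eq_zero_or_eq_succ i with rfl | ⟨i', rfl⟩
          · simpa using hWF
          · simpa using (Finset.filter_subset _ _) (hmem i')
        · intro i
          rcases Fin.eq_zero_or_eq_succ i with rfl | ⟨i', rfl⟩
          · simpa using hWy
          · simpa using hdiag i'
        · intro i j hij
          rcases Fin.eq_zero_or_eq_succ j with rfl | ⟨j', rfl⟩
          · exact absurd hij (by simp)
          rcases Fin.eq_zero_or_eq_succ i with rfl | ⟨i', rfl⟩
          · simpa using (Finset.mem_filter.mp (hmem j')).2
          · simpa using hanti i' j' (by simpa [Fin.succ_lt_succ_iff] using hij)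
      · exact Or.inr ⟨S', y', fun i => (Finset.filter_subset _ _) (hmem i), hdiag, hanti⟩
    · rcases ih (p' + 1) q' F₁ (by omega) h1' with
        ⟨S', y', hmem, hdiag, hanti⟩ | ⟨S', y', hmem, hdiag, hanti⟩
      · exact Or.inl ⟨S', y', fun i => (Finset.filter_subset _ _) (hmem i), hdiag, hanti⟩
      · obtain ⟨W, hWF, hWy⟩ := hWneg
        refine Or.inr ⟨Fin.cons W S', Fin.cons y y', ?_, ?_, ?_⟩
        · intro i
          rcases Fin.eq_zero_or_eq_succ i with rfl | ⟨i', rfl⟩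
          · simpa using hWF
          · simpa using (Finset.filter_subset _ _) (hmem i')
        · intro i
          rcases Fin.eq_zero_or_eq_succ i with rfl | ⟨i', rfl⟩
          · simpa using hWy
          · simpa using hdiag i'
        · intro i j hij
          rcases Fin.eq_zero_or_eq_succ j with rfl | ⟨j', rfl⟩
          · exact absurd hij (by simp)
          rcases Fin.eq_zero_or_eq_succ i with rfl | ⟨i', rfl⟩
          · simpa using (Finset.mem_filter.mp (hmem j')).2
          · simpa using hanti i' j' (by simpa [Fin.succ_lt_succ_iff] using hij)

/-- From a family of at least `2 ^ (2m - 1)` distinct neighbourhoods of `A`-vertices,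
extract a skew matching or the complement of a skew matching of size `m`. -/
lemma main_side {A B : Type} (E : A → B → Prop) (m : ℕ) (hm : 0 < m) (F : Finset (B → Prop))
    (hmem : ∀ S ∈ F, ∃ a, S = fun b => E a b) (hcard : 2 ^ (2 * m - 1) ≤ F.card) :
    (∃ (x : Fin m ↪ A) (y : Fin m ↪ B),
        (∀ i, E (x i) (y i)) ∧ ∀ i j : Fin m, i < j → ¬ E (x j) (y i)) ∨
    (∃ (x : Fin m ↪ A) (y : Fin m ↪ B),
        (∀ i, ¬ E (x i) (y i)) ∧ ∀ i j : Fin m, i < j → E (x j) (y i)) := by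
  rcases key_lemma B (2 * m - 1) m m F (by omega) hcard with
    ⟨S, y, hSF, hdiag, hanti⟩ | ⟨S, y, hSF, hdiag, hanti⟩
  · choose a ha using fun i => hmem (S i) (hSF i)
    have hE : ∀ i, E (a i) (y i) := fun i => by
      have := hdiag i; rw [ha i] at this; exact this
    have hNE : ∀ i j, i < j → ¬ E (a j) (y i) := fun i j hij => by
      have := hanti i j hij; rwa [ha j] at this
    have hainj : Function.Injective a := by
      intro i j hij
      by_contra hne
      rcases lt_or_gt_of_ne hne with h | h
      · exact hNE i j h (hij ▸ hE i)
      · exact hNE j i h (hij ▸ hE j)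
    have hyinj : Function.Injective y := by
      intro i j hij
      by_contra hne
      rcases lt_or_gt_of_ne hne with h | h
      · exact hNE i j h (hij ▸ hE j)
      · exact hNE j i h (hij ▸ hE i)
    exact Or.inl ⟨⟨a, hainj⟩, ⟨y, hyinj⟩, hE, hNE⟩
  · choose a ha using fun i => hmem (S i) (hSF i)
    have hE : ∀ i, ¬ E (a i) (y i) := fun i => by
      have := hdiag i; rw [ha i] at this; exact this
    have hNE : ∀ i j, i < j → E (a j) (y i) := fun i j hij => by
      have := hanti i j hij; rwa [ha j] at this
    have hainj : Function.Injective a := by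
      intro i j hij
      by_contra hne
      rcases lt_or_gt_of_ne hne with h | h
      · exact hE i (hij ▸ hNE i j h)
      · exact hE j (hij ▸ hNE j i h)
    have hyinj : Function.Injective y := by
      intro i j hij
      by_contra hne
      rcases lt_or_gt_of_ne hne with h | h
      · exact hE j (hij ▸ hNE i j h)
      · exact hE i (hij ▸ hNE j i h)
    exact Or.inr ⟨⟨a, hainj⟩, ⟨y, hyinj⟩, hE, hNE⟩

lemma bipGraph_adj_inl {A B : Type} {E : A → B → Prop} (z : A ⊕ B) (a : A) :
    (bipGraph A B E).Adj z (Sum.inl a) ↔ ∃ b, z = Sum.inr b ∧ E a b := by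
  simp only [bipGraph, SimpleGraph.fromRel_adj]
  constructor
  · rintro ⟨hne, ⟨a', b, rfl, h, _⟩ | ⟨a', b, ha, rfl, hE⟩⟩
    · exact absurd h (by simp)
    · exact ⟨b, rfl, by injection ha with h'; rwa [h']⟩
  · rintro ⟨b, rfl, hE⟩
    exact ⟨by simp, Or.inr ⟨a, b, rfl, rfl, hE⟩⟩

lemma bipGraph_adj_inr {A B : Type} {E : A → B → Prop} (z : A ⊕ B) (b : B) :
    (bipGraph A B E).Adj z (Sum.inr b) ↔ ∃ a, z = Sum.inl a ∧ E a b := by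
  simp only [bipGraph, SimpleGraph.fromRel_adj]
  constructor
  · rintro ⟨hne, ⟨a', b', rfl, h, hE⟩ | ⟨a', b', h, rfl, _⟩⟩
    · exact ⟨a', rfl, by injection h with h'; rwa [h']⟩
    · exact absurd h (by simp)
  · rintro ⟨a, rfl, hE⟩
    exact ⟨by simp, Or.inl ⟨a, b, rfl, rfl, hE⟩⟩

lemma similar_inl {A B : Type} {E : A → B → Prop} {a a' : A}
    (h : (fun b => E a b) = fun b => E a' b) :
    VertSimilar (bipGraph A B E) (Sum.inl a) (Sum.inl a') := by
  intro z _ _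
  rw [bipGraph_adj_inl, bipGraph_adj_inl]
  constructor
  · rintro ⟨b, rfl, hE⟩
    exact ⟨b, rfl, by have := congrFun h b; simpa using this.mp hE⟩
  · rintro ⟨b, rfl, hE⟩
    exact ⟨b, rfl, by have := congrFun h b; simpa using this.mpr hE⟩

lemma similar_inr {A B : Type} {E : A → B → Prop} {b b' : B}
    (h : (fun a => E a b) = fun a => E a b') :
    VertSimilar (bipGraph A B E) (Sum.inr b) (Sum.inr b') := by
  intro z _ _
  rw [bipGraph_adj_inr, bipGraph_adj_inr]
  constructor
  · rintro ⟨a, rfl, hE⟩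
    exact ⟨a, rfl, by have := congrFun h a; simpa using this.mp hE⟩
  · rintro ⟨a, rfl, hE⟩
    exact ⟨a, rfl, by have := congrFun h a; simpa using this.mpr hE⟩

open Classical in
/-- For every positive integer `m`, with `r = 2^{2m}`, every bipartite graph with
neighbourhood diversity at least `r` (i.e. containing `r` pairwise non-similar vertices)
contains a skew matching of size `m` or the complement of a skew matching of size `m`. -/
theorem skew_matching_of_large_diversity (m : ℕ) (hm : 0 < m) :
    ∀ (A B : Type) (E : A → B → Prop),
      (∃ f : Fin (2 ^ (2 * m)) ↪ (A ⊕ B),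
        ∀ i j, i ≠ j → ¬ VertSimilar (bipGraph A B E) (f i) (f j)) →
      ((∃ (x : Fin m ↪ A) (y : Fin m ↪ B),
          (∀ i, E (x i) (y i)) ∧ ∀ i j : Fin m, i < j → ¬ E (x j) (y i)) ∨
       (∃ (x : Fin m ↪ A) (y : Fin m ↪ B),
          (∀ i, ¬ E (x i) (y i)) ∧ ∀ i j : Fin m, i < j → E (x j) (y i))) := by
  intro A B E ⟨f, hf⟩
  set L := Finset.univ.filter (fun i : Fin (2 ^ (2 * m)) => (f i).isLeft = true) with hL
  set R := Finset.univ.filter (fun i : Fin (2 ^ (2 * m)) => ¬ (f i).isLeft = true) with hR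
  have hsum : L.card + R.card = 2 ^ (2 * m) := by
    have := Finset.card_filter_add_card_filter_not
      (s := (Finset.univ : Finset (Fin (2 ^ (2 * m)))))
      (p := fun i => (f i).isLeft = true)
    rw [Finset.card_univ, Fintype.card_fin] at this
    exact this
  have hpow : 2 ^ (2 * m) = 2 * 2 ^ (2 * m - 1) := by
    have h : 2 * m = (2 * m - 1) + 1 := by omega
    conv_lhs => rw [h]
    rw [pow_succ, Nat.mul_comm]
  have hsplit : 2 ^ (2 * m - 1) ≤ L.card ∨ 2 ^ (2 * m - 1) ≤ R.card := by omega
  rcases hsplit with hbig | hbig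
  · -- the A-side is big
    have hmemL : ∀ i ∈ L, ∃ a, f i = Sum.inl a := by
      intro i hi
      have : (f i).isLeft = true := (Finset.mem_filter.mp hi).2
      exact Sum.isLeft_iff.mp this
    set nb : (A ⊕ B) → (B → Prop) := fun u b => ∃ a, u = Sum.inl a ∧ E a b with hnb
    have hnbinl : ∀ (a : A), nb (Sum.inl a) = fun b => E a b := by
      intro a
      funext b
      apply propext
      simp [hnb]
    set F := L.image (fun i => nb (f i)) with hF
    have hinj : Set.InjOn (fun i => nb (f i)) L := by
      intro i hi j hj hij
      by_contra hne
      obtain ⟨a, ha⟩ := hmemL i hi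
      obtain ⟨a', ha'⟩ := hmemL j hj
      apply hf i j hne
      rw [ha, ha']
      apply similar_inl
      have : nb (f i) = nb (f j) := hij
      rw [ha, ha', hnbinl, hnbinl] at this
      exact this
    have hcardF : 2 ^ (2 * m - 1) ≤ F.card := by
      rw [hF, Finset.card_image_of_injOn hinj]
      exact hbig
    refine main_side E m hm F ?_ hcardF
    intro S hS
    obtain ⟨i, hi, hSi⟩ := Finset.mem_image.mp hS
    obtain ⟨a, ha⟩ := hmemL i hi
    exact ⟨a, by rw [← hSi, ha, hnbinl]⟩
  · -- the B-side is big
    have hmemR : ∀ i ∈ R, ∃ b, f i = Sum.inr b := by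
      intro i hi
      have : ¬ (f i).isLeft = true := (Finset.mem_filter.mp hi).2
      exact Sum.isRight_iff.mp (Sum.not_isLeft.mp this)
    set nb : (A ⊕ B) → (A → Prop) := fun u a => ∃ b, u = Sum.inr b ∧ E a b with hnb
    have hnbinr : ∀ (b : B), nb (Sum.inr b) = fun a => E a b := by
      intro b
      funext a
      apply propext
      simp [hnb]
    set F := R.image (fun i => nb (f i)) with hF
    have hinj : Set.InjOn (fun i => nb (f i)) R := by
      intro i hi j hj hij
      by_contra hne
      obtain ⟨b, hb⟩ := hmemR i hi
      obtain ⟨b', hb'⟩ := hmemR j hj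
      apply hf i j hne
      rw [hb, hb']
      apply similar_inr
      have : nb (f i) = nb (f j) := hij
      rw [hb, hb', hnbinr, hnbinr] at this
      exact this
    have hcardF : 2 ^ (2 * m - 1) ≤ F.card := by
      rw [hF, Finset.card_image_of_injOn hinj]
      exact hbig
    have hmemF : ∀ S ∈ F, ∃ b, S = fun a => (fun b a => E a b) b a := by
      intro S hS
      obtain ⟨i, hi, hSi⟩ := Finset.mem_image.mp hS
      obtain ⟨b, hb⟩ := hmemR i hi
      exact ⟨b, by rw [← hSi, hb, hnbinr]⟩
    rcases main_side (fun b a => E a b) m hm F hmemF hcardF with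
      ⟨x, y, hdiag, hanti⟩ | ⟨x, y, hdiag, hanti⟩
    · refine Or.inl ⟨⟨fun i => y i.rev, fun i j h => Fin.rev_injective (y.injective h)⟩,
        ⟨fun i => x i.rev, fun i j h => Fin.rev_injective (x.injective h)⟩,
        fun i => hdiag i.rev, ?_⟩
      intro i j hij
      exact hanti j.rev i.rev (Fin.rev_lt_rev.mpr hij)
    · refine Or.inr ⟨⟨fun i => y i.rev, fun i j h => Fin.rev_injective (y.injective h)⟩,
        ⟨fun i => x i.rev, fun i j h => Fin.rev_injective (x.injective h)⟩,
        fun i => hdiag i.rev, ?_⟩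
      intro i j hij
      exact hanti j.rev i.rev (Fin.rev_lt_rev.mpr hij)
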